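/- Let (G,k) be a weakly reversible mass-action system with distinct source vertices y₁,…,y_m and net reaction vectors w₁,…,w_m. Then span{w₁,…,w_m} equals the stoichiometric subspace S of G. -/

import Mathlib

open scoped BigOperators Classical
noncomputable section

/-- The monomial `x ^ y = ∏ i, x i ^ y i` (real exponents). -/
def monom {n : ℕ} (x y : Fin n → ℝ) : ℝ := ∏ i, x i ^ y i

/-- A reaction network: a finite directed graph with vertices in `ℝⁿ`,
edges indexed by `Fin m` via source and target maps. -/
structure RN (n : ℕ) where
  m : ℕ
  src : Fin m → Fin n → ℝ
  tgt : Fin m → Fin n → ℝ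

namespace RN

variable {n : ℕ} (G : RN n)

/-- The (finite) vertex set of the network. -/
def Vset : Finset (Fin n → ℝ) :=
  Finset.image G.src Finset.univ ∪ Finset.image G.tgt Finset.univ

lemma src_mem (e : Fin G.m) : G.src e ∈ G.Vset :=
  Finset.mem_union_left _ (Finset.mem_image_of_mem _ (Finset.mem_univ e))

/-- The vertices, as a type. -/
def Vert := {y : Fin n → ℝ // y ∈ G.Vset}

/-- Undirected adjacency between vertices. -/
def adjSub (a b : G.Vert) : Prop :=
  ∃ e, (G.src e = a.1 ∧ G.tgt e = b.1) ∨ (G.src e = b.1 ∧ G.tgt e = a.1)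

/-- The connected components of the underlying undirected graph. -/
def Components := Quot G.adjSub

/-- The number of connected components. -/
def numComp : ℕ := Nat.card G.Components

/-- The connected component of a vertex. -/
def compOf (v : G.Vert) : G.Components := Quot.mk _ v

/-- The stoichiometric subspace: the span of the reaction vectors. -/
def stoich : Submodule ℝ (Fin n → ℝ) :=
  Submodule.span ℝ (Set.range fun e => G.tgt e - G.src e)

/-- The deficiency `|V| - ℓ - dim S` (as an integer). -/
def deficiency : ℤ :=
  (G.Vset.card : ℤ) - G.numComp - Module.finrank ℝ G.stoich

/-- `y` is a source vertex of `G`. -/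
def IsSource (y : Fin n → ℝ) : Prop := ∃ e, G.src e = y

/-- The net reaction vector of `y` for the mass-action system `(G, k)`. -/
def netVec (k : Fin G.m → ℝ) (y : Fin n → ℝ) : Fin n → ℝ :=
  ∑ e, if G.src e = y then k e • (G.tgt e - G.src e) else 0

/-- The mass-action vector field generated by `(G, k)`. -/
def massAction (k : Fin G.m → ℝ) (x : Fin n → ℝ) : Fin n → ℝ :=
  ∑ e, (k e * monom x (G.src e)) • (G.tgt e - G.src e)

/-- `G` is weakly reversible: for every edge there is a directed path back from its
target to its source, i.e. every edge lies on a directed cycle. -/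
def WeaklyReversible : Prop :=
  ∀ e, Relation.ReflTransGen (fun a b => ∃ e', G.src e' = a ∧ G.tgt e' = b)
    (G.tgt e) (G.src e)

/-- The number of vertices of a connected component. -/
def compVertCount (c : G.Components) : ℕ := Nat.card {v : G.Vert // G.compOf v = c}

/-- The stoichiometric subspace of a connected component. -/
def compStoich (c : G.Components) : Submodule ℝ (Fin n → ℝ) :=
  Submodule.span ℝ
    {w | ∃ e, G.compOf ⟨G.src e, G.src_mem e⟩ = c ∧ w = G.tgt e - G.src e}

/-- The deficiency `|V_L| - 1 - dim S_L` of a connected component (as an integer). -/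
def compDef (c : G.Components) : ℤ :=
  (G.compVertCount c : ℤ) - 1 - Module.finrank ℝ (G.compStoich c)

end RN

namespace RNproofAux

variable {n : ℕ}

lemma tgt_mem (G : RN n) (e : Fin G.m) : G.tgt e ∈ G.Vset :=
  Finset.mem_union_right _ (Finset.mem_image_of_mem _ (Finset.mem_univ e))

/-- dot product of `u` with the net vector, expanded as a sum over edges. -/
lemma dot_netVec (G : RN n) (k : Fin G.m → ℝ) (u y : Fin n → ℝ) :
    ∑ i, u i * G.netVec k y i =
      ∑ e, if G.src e = y then
        k e * ((∑ i, u i * G.tgt e i) - ∑ i, u i * G.src e i) else 0 := by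
  unfold RN.netVec
  calc ∑ i, u i * (∑ e, if G.src e = y then k e • (G.tgt e - G.src e) else 0) i
      = ∑ i, ∑ e, (if G.src e = y then u i * (k e * (G.tgt e i - G.src e i)) else 0) := by
        refine Finset.sum_congr rfl fun i _ => ?_
        rw [Finset.sum_apply, Finset.mul_sum]
        refine Finset.sum_congr rfl fun e _ => ?_
        by_cases h : G.src e = y <;> simp [h]
    _ = ∑ e, ∑ i, (if G.src e = y then u i * (k e * (G.tgt e i - G.src e i)) else 0) :=
        Finset.sum_comm
    _ = ∑ e, if G.src e = y then
          k e * ((∑ i, u i * G.tgt e i) - ∑ i, u i * G.src e i) else 0 := by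
        refine Finset.sum_congr rfl fun e _ => ?_
        by_cases h : G.src e = y
        · simp only [h, if_true]
          rw [← Finset.sum_sub_distrib, Finset.mul_sum]
          exact Finset.sum_congr rfl fun i _ => by ring
        · simp [h]

/-- Key combinatorial lemma: if `u` is orthogonal to every net vector then it is
orthogonal to every reaction vector. -/
lemma key (G : RN n) (k : Fin G.m → ℝ) (hk : ∀ e, 0 < k e) (hwr : G.WeaklyReversible)
    (u : Fin n → ℝ) (hu : ∀ y, G.IsSource y → ∑ i, u i * G.netVec k y i = 0)
    (e : Fin G.m) : ∑ i, u i * G.tgt e i = ∑ i, u i * G.src e i := by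
  set r : (Fin n → ℝ) → (Fin n → ℝ) → Prop :=
    fun a b => ∃ e', G.src e' = a ∧ G.tgt e' = b with hr
  -- reachability is symmetric thanks to weak reversibility
  have hsymm : ∀ a b, Relation.ReflTransGen r a b → Relation.ReflTransGen r b a := by
    intro a b h
    induction h with
    | refl => exact Relation.ReflTransGen.refl
    | tail _ hbc ih =>
      obtain ⟨e', he1, he2⟩ := hbc
      exact Relation.ReflTransGen.trans (he1 ▸ he2 ▸ hwr e') ih
  -- the set of vertices reachable from the source of `e`
  set F : Finset (Fin n → ℝ) :=
    G.Vset.filter (fun v => Relation.ReflTransGen r (G.src e) v) with hF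
  have hsrcF : G.src e ∈ F := by
    rw [hF, Finset.mem_filter]
    exact ⟨G.src_mem e, Relation.ReflTransGen.refl⟩
  obtain ⟨ystar, hyF, hymax⟩ :=
    Finset.exists_max_image F (fun v => ∑ i, u i * v i) ⟨_, hsrcF⟩
  set M : ℝ := ∑ i, u i * ystar i with hM
  -- edges out of a maximizing vertex in `F` stay maximizing
  have stepB : ∀ y, y ∈ F → (∑ i, u i * y i) = M →
      ∀ e', G.src e' = y → G.tgt e' ∈ F ∧ (∑ i, u i * G.tgt e' i) = M := by
    intro y hyFmem hyM e' he'
    have hreach : Relation.ReflTransGen r (G.src e) y := (Finset.mem_filter.1 hyFmem).2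
    have htgtF : ∀ e'', G.src e'' = y → G.tgt e'' ∈ F := by
      intro e'' he''
      rw [hF, Finset.mem_filter]
      exact ⟨tgt_mem G e'', hreach.tail ⟨e'', he'', rfl⟩⟩
    have hnonpos : ∀ e'' ∈ (Finset.univ : Finset (Fin G.m)),
        (if G.src e'' = y then
          k e'' * ((∑ i, u i * G.tgt e'' i) - ∑ i, u i * G.src e'' i) else 0) ≤ 0 := by
      intro e'' _
      by_cases h : G.src e'' = y
      · simp only [h, if_true]
        have hle : (∑ i, u i * G.tgt e'' i) ≤ M := hymax _ (htgtF e'' h)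
        have : (∑ i, u i * G.src e'' i) = M := by rw [h, hyM]
        nlinarith [hk e'', hle, this]
      · simp [h]
    have hsum0 : ∑ e'', (if G.src e'' = y then
        k e'' * ((∑ i, u i * G.tgt e'' i) - ∑ i, u i * G.src e'' i) else 0) = 0 := by
      rw [← dot_netVec]
      exact hu y ⟨e', he'⟩
    have hall := (Finset.sum_eq_zero_iff_of_nonpos hnonpos).1 hsum0
    have h0 := hall e' (Finset.mem_univ e')
    rw [he', if_pos rfl] at h0
    have hksub : (∑ i, u i * G.tgt e' i) - ∑ i, u i * y i = 0 := by
      rcases mul_eq_zero.1 h0 with h | h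
      · exact absurd h (hk e').ne'
      · exact h
    refine ⟨htgtF e' he', ?_⟩
    have := sub_eq_zero.1 hksub
    rw [this, hyM]
  -- every vertex reachable from `ystar` is maximizing
  have stepC : ∀ b, Relation.ReflTransGen r ystar b → b ∈ F ∧ (∑ i, u i * b i) = M := by
    intro b h
    induction h with
    | refl => exact ⟨hyF, rfl⟩
    | tail _ hbc ih =>
      obtain ⟨e', he1, he2⟩ := hbc
      have := stepB _ ih.1 ih.2 e' he1
      exact he2 ▸ this
  have hsrc := stepC (G.src e) (hsymm _ _ (Finset.mem_filter.1 hyF).2)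
  have := stepB (G.src e) hsrc.1 hsrc.2 e rfl
  rw [this.2, hsrc.2]

end RNproofAux

/-- For a weakly reversible mass-action system, the span of the net reaction vectors of
the source vertices equals the stoichiometric subspace. -/
theorem weakly_reversible_span_netVec_eq_stoich {n : ℕ} (G : RN n)
    (k : Fin G.m → ℝ) (hk : ∀ e, 0 < k e) (hwr : G.WeaklyReversible) :
    Submodule.span ℝ {w | ∃ y, G.IsSource y ∧ w = G.netVec k y} = G.stoich := by
  apply le_antisymm
  · -- easy inclusion: each net vector is a combination of reaction vectors
    rw [Submodule.span_le]
    rintro w ⟨y, _, rfl⟩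
    refine Submodule.sum_mem _ fun e _ => ?_
    by_cases h : G.src e = y
    · simp only [h, if_true]
      exact Submodule.smul_mem _ _ (Submodule.subset_span ⟨e, show G.tgt e - G.src e = G.tgt e - y by rw [h]⟩)
    · simp [h]
  · -- hard inclusion via orthogonal complements in Euclidean space
    set W : Submodule ℝ (Fin n → ℝ) :=
      Submodule.span ℝ {w | ∃ y, G.IsSource y ∧ w = G.netVec k y} with hW
    set φ : (Fin n → ℝ) ≃ₗ[ℝ] EuclideanSpace ℝ (Fin n) :=
      (WithLp.linearEquiv 2 ℝ (Fin n → ℝ)).symm with hφ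
    set W' : Submodule ℝ (EuclideanSpace ℝ (Fin n)) := W.map (φ : (Fin n → ℝ) →ₗ[ℝ] EuclideanSpace ℝ (Fin n)) with hW'
    unfold RN.stoich
    rw [Submodule.span_le]
    rintro w ⟨e, rfl⟩
    have hmem : φ (G.tgt e - G.src e) ∈ W' := by
      rw [← Submodule.orthogonal_orthogonal W']
      rw [Submodule.mem_orthogonal]
      intro u hu
      have hudot : ∀ y, G.IsSource y → ∑ i, (φ.symm u) i * G.netVec k y i = 0 := by
        intro y hy
        have hmem' : φ (G.netVec k y) ∈ W' :=
          Submodule.mem_map_of_mem (Submodule.subset_span ⟨y, hy, rfl⟩)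
        have := hu _ hmem'
        rw [PiLp.inner_apply] at this
        simp only [RCLike.inner_apply, conj_trivial] at this
        calc ∑ i, (φ.symm u) i * G.netVec k y i
            = ∑ i, φ (G.netVec k y) i * u i :=
              Finset.sum_congr rfl fun i _ => mul_comm _ _
          _ = 0 := by rw [← this]; exact Finset.sum_congr rfl fun i _ => mul_comm _ _
      have hkey := RNproofAux.key G k hk hwr (φ.symm u) hudot e
      rw [PiLp.inner_apply]
      simp only [RCLike.inner_apply, conj_trivial]
      have : ∑ i, (φ.symm u) i * (G.tgt e - G.src e) i = 0 := by
        have : ∑ i, (φ.symm u) i * (G.tgt e - G.src e) i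
            = (∑ i, (φ.symm u) i * G.tgt e i) - ∑ i, (φ.symm u) i * G.src e i := by
          rw [← Finset.sum_sub_distrib]
          exact Finset.sum_congr rfl fun i _ => by simp [Pi.sub_apply]; ring
        rw [this, hkey, sub_self]
      calc ∑ i, φ (G.tgt e - G.src e) i * u i
          = ∑ i, (φ.symm u) i * (G.tgt e - G.src e) i := by
            refine Finset.sum_congr rfl fun i _ => by rw [mul_comm]; rfl
        _ = 0 := this
    have := (Submodule.mem_map_equiv W).1 hmem
    simpa using this
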